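/- Let q'(x) be a tree-like CQ and h a homomorphism from q' to a CQ q(x). For every node w of the query graph of q', let P_w denote the image under h of the unique path in q' from the root x to w. If A = R(t,t') is an atom of q' with t the parent of t' in the tree, and A' = R(h(t),h(t')), then exactly one of the following holds: (i) valid(P_{t'}) = valid(P_t), A', end(P_{t'}), i.e., valid(P_{t'}) extends valid(P_t) by the atom A' (this happens when A' differs from the last atom of valid(P_t)); or (ii) valid(P_t) = valid(P_{t'}), A', end(P_t), i.e., valid(P_t) extends valid(P_{t'}) by the atom A' (this happens when A' coincides with the last atom of valid(P_t)). -/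

import Mathlib

/-!
Formalization of conjunctive queries (CQs) over knowledge graphs, homomorphisms,
paths, valid paths, unravelings, query graphs and tree-likeness, following the
paper "Approximate Answering of Graph Queries" setting.
-/

namespace KGQuery

/-- Constants: a countably infinite set. -/
abbrev Con : Type := ℕ

/-- Variables: a countably infinite set (disjoint from the constants via `Term`). -/
abbrev Var : Type := ℕ

/-- Terms are variables or constants. -/
inductive Term : Type
  | var : Var → Term
  | con : Con → Term
deriving DecidableEq

/-- An atom `R(y, z)` with `y, z` terms. -/
structure Atom (Rel : Type) : Type where
  rel : Rel
  src : Term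
  tgt : Term
deriving DecidableEq

/-- A fact `R(a, b)` with `a, b` constants. -/
structure Fact (Rel : Type) : Type where
  rel : Rel
  src : Con
  tgt : Con
deriving DecidableEq

/-- A knowledge graph: a finite set of facts. -/
abbrev KG (Rel : Type) : Type := Finset (Fact Rel)

/-- A (unary) conjunctive query: a finite nonempty set of atoms in which the
target variable occurs. -/
structure CQ (Rel : Type) : Type where
  target : Var
  atoms : Finset (Atom Rel)
  atoms_nonempty : atoms.Nonempty
  target_occurs : ∃ A ∈ atoms, A.src = Term.var target ∨ A.tgt = Term.var target

variable {Rel : Type}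

/-- The terms occurring in the atoms of a CQ. -/
def CQ.terms (q : CQ Rel) : Set Term :=
  {t | ∃ A ∈ q.atoms, A.src = t ∨ A.tgt = t}

/-- `Var(q)`: the variables occurring in `q`. -/
def CQ.vars (q : CQ Rel) : Set Var := {v | Term.var v ∈ q.terms}

/-- `Con(q)`: the constants occurring in `q`. -/
def CQ.cons (q : CQ Rel) : Set Con := {c | Term.con c ∈ q.terms}

/-- The answer `q(G)` of a CQ `q` over a knowledge graph `G`: the set of constants
`a` such that some assignment `μ` fixing the constants of `q` maps the target
variable to `a` and every atom of `q` to a fact of `G`. -/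
def CQ.answer (q : CQ Rel) (G : KG Rel) : Set Con :=
  {a | ∃ μ : Term → Con,
    (∀ c ∈ q.cons, μ (Term.con c) = c) ∧
    μ (Term.var q.target) = a ∧
    ∀ A ∈ q.atoms, (⟨A.rel, μ A.src, μ A.tgt⟩ : Fact Rel) ∈ G}

/-- Containment `q ⊆ q'`: the answers of `q` are contained in those of `q'`
over every knowledge graph. -/
def CQ.contained (q q' : CQ Rel) : Prop :=
  ∀ G : KG Rel, q.answer G ⊆ q'.answer G

/-- A homomorphism from `q` to `q'`: maps the target variable of `q` to the target
variable of `q'`, fixes the constants of `q`, and maps every atom of `q` to an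
atom of `q'`. -/
def IsHom (q q' : CQ Rel) (h : Term → Term) : Prop :=
  h (Term.var q.target) = Term.var q'.target ∧
  (∀ c ∈ q.cons, h (Term.con c) = Term.con c) ∧
  ∀ A ∈ q.atoms, (⟨A.rel, h A.src, h A.tgt⟩ : Atom Rel) ∈ q'.atoms

/-! ### The canonical database -/

/-- Replace variables by constants using `ι`. -/
def termToCon (ι : Var → Con) : Term → Con
  | Term.var v => ι v
  | Term.con c => c

/-- The canonical database of `q`: the knowledge graph obtained from the atoms of
`q` by replacing each variable `v` by the constant `ι v`. -/
def canonicalDB [DecidableEq Rel] (q : CQ Rel) (ι : Var → Con) : KG Rel :=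
  q.atoms.image (fun A => ⟨A.rel, termToCon ι A.src, termToCon ι A.tgt⟩)

/-! ### Paths and valid paths -/

/-- The atom `A` is traversed from `u` to `v`: forward (`A = R(u,v)`) or
backward (`A = R(v,u)`). -/
def Traverses (A : Atom Rel) (u v : Term) : Prop :=
  (A.src = u ∧ A.tgt = v) ∨ (A.src = v ∧ A.tgt = u)

/-- A path starting at the term `u`, encoded as its list of steps `(Aᵢ, xᵢ)`:
each atom `Aᵢ` belongs to `q` and is traversed from `xᵢ₋₁` to `xᵢ`. -/
def IsPathFrom (q : CQ Rel) : Term → List (Atom Rel × Term) → Prop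
  | _, [] => True
  | u, (A, v) :: rest => A ∈ q.atoms ∧ Traverses A u v ∧ IsPathFrom q v rest

/-- A path of `q(x)`: a path starting at the target variable `x`.
The path `x₀, A₁, x₁, …, A_k, x_k` is encoded as the list `[(A₁,x₁),…,(A_k,x_k)]`,
whose length `k` is the length of the path. -/
def IsPath (q : CQ Rel) (P : List (Atom Rel × Term)) : Prop :=
  IsPathFrom q (Term.var q.target) P

/-- The end of a path (the target variable for the path of length `0`). -/
def pathEnd (q : CQ Rel) (P : List (Atom Rel × Term)) : Term :=
  match P.getLast? with
  | none => Term.var q.target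
  | some s => s.2

/-- Validity: no two consecutive steps traverse the same atom. -/
def IsValid (P : List (Atom Rel × Term)) : Prop :=
  (P.map Prod.fst).Chain' (· ≠ ·)

/-- A valid path of `q`. -/
def IsValidPath (q : CQ Rel) (P : List (Atom Rel × Term)) : Prop :=
  IsPath q P ∧ IsValid P

/-- A path is unanchored if it ends at a variable (anchored if it ends at a
constant). -/
def Unanchored (q : CQ Rel) (P : List (Atom Rel × Term)) : Prop :=
  ∃ v : Var, pathEnd q P = Term.var v

/-! ### Unravelings -/

/-- The term `o_P` of the unraveling associated to a valid path `P`: the fresh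
variable `z_P = enc P` if `P` is unanchored, and the constant `end(P)` otherwise. -/
def oTerm (q : CQ Rel) (enc : List (Atom Rel × Term) → Var)
    (P : List (Atom Rel × Term)) : Term :=
  match pathEnd q P with
  | Term.var _ => Term.var (enc P)
  | Term.con c => Term.con c

/-- The set of atoms of the unraveling `q̃_d` of `q`: for every valid path
`P' = P, A', end(P')` of length at most `d`, the atom `R(o_P, o_{P'})` if
`A' = R(end(P), end(P'))`, and the atom `R(o_{P'}, o_P)` if
`A' = R(end(P'), end(P))`. -/
def UnravelAtoms (q : CQ Rel) (enc : List (Atom Rel × Term) → Var) (d : ℕ) :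
    Set (Atom Rel) :=
  {B | ∃ (P : List (Atom Rel × Term)) (A' : Atom Rel) (t' : Term),
    IsValidPath q (P ++ [(A', t')]) ∧ P.length + 1 ≤ d ∧
    ((A'.src = pathEnd q P ∧ A'.tgt = t' ∧
        B = ⟨A'.rel, oTerm q enc P, oTerm q enc (P ++ [(A', t')])⟩) ∨
     (A'.src = t' ∧ A'.tgt = pathEnd q P ∧
        B = ⟨A'.rel, oTerm q enc (P ++ [(A', t')]), oTerm q enc P⟩))}

/-- `qd` is (a presentation of) the unraveling `q̃_d` of `q`, where the injective
map `enc` provides the distinct fresh variables `z_P` indexing the unanchored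
valid paths: its target variable is `z_{P₀} = enc []` and its atoms are exactly
the unraveling atoms. -/
def IsUnraveling (q : CQ Rel) (enc : List (Atom Rel × Term) → Var) (d : ℕ)
    (qd : CQ Rel) : Prop :=
  Function.Injective enc ∧ qd.target = enc [] ∧
    (↑qd.atoms : Set (Atom Rel)) = UnravelAtoms q enc d

/-! ### Query graphs and tree-likeness -/

/-- Nodes of the query graph of a CQ: either a variable, or an occurrence of a
constant in an atom (`false` = source position, `true` = target position). -/
abbrev QNode (Rel : Type) : Type := Var ⊕ (Atom Rel × Bool)

/-- The term at position `b` of an atom. -/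
def Atom.pos (A : Atom Rel) (b : Bool) : Term := cond b A.tgt A.src

/-- The node of the query graph corresponding to position `b` of atom `A`:
the variable itself, or the occurrence node for a constant. -/
def endpointNode (A : Atom Rel) (b : Bool) : QNode Rel :=
  match A.pos b with
  | Term.var v => Sum.inl v
  | Term.con _ => Sum.inr (A, b)

/-- The node set of the query graph of `q`: the variables of `q` together with
one node per occurrence of a constant in an atom of `q`. -/
def nodeSet (q : CQ Rel) : Set (QNode Rel) :=
  (Sum.inl '' q.vars) ∪
    {n | ∃ A ∈ q.atoms, ∃ b : Bool, (∃ c : Con, A.pos b = Term.con c) ∧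
      n = Sum.inr (A, b)}

/-- Adjacency in the query graph of `q`: one (undirected) edge per atom. -/
def Adj (q : CQ Rel) (m n : QNode Rel) : Prop :=
  ∃ A ∈ q.atoms,
    (m = endpointNode A false ∧ n = endpointNode A true) ∨
    (m = endpointNode A true ∧ n = endpointNode A false)

/-- The root of the query graph of a CQ: its target variable. -/
def rootNode (q : CQ Rel) : QNode Rel := Sum.inl q.target

/-- `q` is tree-like: its query graph is a tree rooted at the target variable,
i.e. every node is connected to the root and the number of edges (= atoms) is one
less than the number of nodes. -/
def IsTreeLike (q : CQ Rel) : Prop :=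
  (∀ n ∈ nodeSet q, Relation.ReflTransGen (Adj q) (rootNode q) n) ∧
  (nodeSet q).ncard = q.atoms.card + 1

/-- Reachability in at most `d` steps of a relation. -/
def ReachIn {α : Type*} (r : α → α → Prop) : ℕ → α → α → Prop
  | 0, a, b => a = b
  | n + 1, a, b => a = b ∨ ∃ c, r a c ∧ ReachIn r n c b

/-- The (rooted) query graph of `q` has depth at most `d`: every node is within
distance `d` of the root. -/
def HasDepthLE (q : CQ Rel) (d : ℕ) : Prop :=
  ∀ n ∈ nodeSet q, ReachIn (Adj q) d (rootNode q) n

/-- The depth of (the query graph of) a tree-like CQ: the length of the longest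
path from the root to a node. -/
noncomputable def depth (q : CQ Rel) : ℕ := sInf {d : ℕ | HasDepthLE q d}

/-! ### Reduction of paths to valid paths -/

/-- One step of reduction: replace a subsequence `y, A, z, A, y` by `y`. -/
def PathReduce (q : CQ Rel) (P Q : List (Atom Rel × Term)) : Prop :=
  ∃ (L1 : List (Atom Rel × Term)) (A : Atom Rel) (z y : Term)
    (L2 : List (Atom Rel × Term)),
    pathEnd q L1 = y ∧ P = L1 ++ (A, z) :: (A, y) :: L2 ∧ Q = L1 ++ L2

/-- Append one step to an already valid path, cancelling a backtracking step. -/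
def validAppend [DecidableEq Rel] (P : List (Atom Rel × Term))
    (s : Atom Rel × Term) : List (Atom Rel × Term) :=
  match P.getLast? with
  | none => [s]
  | some t => if t.1 = s.1 then P.dropLast else P ++ [s]

/-- `valid(P)`: the unique valid path obtained from the path `P` by iteratively
replacing subsequences of the form `y, A, z, A, y` by `y`. -/
def validify [DecidableEq Rel] (P : List (Atom Rel × Term)) :
    List (Atom Rel × Term) :=
  P.foldl validAppend []

/-- The image of an atom under a map on terms. -/
def Atom.mapTerms (h : Term → Term) (A : Atom Rel) : Atom Rel :=
  ⟨A.rel, h A.src, h A.tgt⟩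

/-- The image under `h` of a path: apply `h` to every element and every atom. -/
def mapPath (h : Term → Term) (P : List (Atom Rel × Term)) :
    List (Atom Rel × Term) :=
  P.map (fun s => (s.1.mapTerms h, h s.2))

end KGQuery
namespace KGQuery

variable {Rel : Type}

/-- End of a path starting at `u`. -/
def endFrom : Term → List (Atom Rel × Term) → Term
  | u, [] => u
  | _, (_, v) :: rest => endFrom v rest

lemma endFrom_append (u : Term) (L M : List (Atom Rel × Term)) :
    endFrom u (L ++ M) = endFrom (endFrom u L) M := by
  induction L generalizing u with
  | nil => rfl
  | cons s rest ih =>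
    obtain ⟨A, v⟩ := s
    exact ih v

lemma endFrom_eq (u : Term) (P : List (Atom Rel × Term)) :
    endFrom u P = (P.getLast?).elim u Prod.snd := by
  induction P using List.reverseRecOn with
  | nil => rfl
  | append_singleton Q s _ =>
    rw [endFrom_append, List.getLast?_concat]
    rfl

lemma pathEnd_eq_endFrom (q : CQ Rel) (P : List (Atom Rel × Term)) :
    pathEnd q P = endFrom (Term.var q.target) P := by
  rw [endFrom_eq, pathEnd]
  cases P.getLast? <;> rfl

lemma isPathFrom_append {q : CQ Rel} {M : List (Atom Rel × Term)}
    {u : Term} {L : List (Atom Rel × Term)} :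
    IsPathFrom q u (L ++ M) ↔ IsPathFrom q u L ∧ IsPathFrom q (endFrom u L) M := by
  induction L generalizing u with
  | nil => simp [IsPathFrom, endFrom]
  | cons s rest ih =>
    obtain ⟨A, v⟩ := s
    show (A ∈ q.atoms ∧ Traverses A u v ∧ IsPathFrom q v (rest ++ M)) ↔
      (A ∈ q.atoms ∧ Traverses A u v ∧ IsPathFrom q v rest) ∧
        IsPathFrom q (endFrom v rest) M
    rw [ih]
    exact ⟨fun ⟨a, b, c, d⟩ => ⟨⟨a, b, c⟩, d⟩, fun ⟨⟨a, b, c⟩, d⟩ => ⟨a, b, c, d⟩⟩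

lemma traverses_cancel {A : Atom Rel} {x z y : Term}
    (h1 : Traverses A x z) (h2 : Traverses A z y) : y = x := by
  rcases h1 with ⟨e1, e2⟩ | ⟨e1, e2⟩ <;> rcases h2 with ⟨f1, f2⟩ | ⟨f1, f2⟩ <;>
    simp_all

lemma validify_append_singleton [DecidableEq Rel] (L : List (Atom Rel × Term))
    (s : Atom Rel × Term) :
    validify (L ++ [s]) = validAppend (validify L) s := by
  simp [validify, List.foldl_append]

lemma validAppend_of_getLast?_none [DecidableEq Rel]
    {P : List (Atom Rel × Term)} (h : P.getLast? = none) (s : Atom Rel × Term) :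
    validAppend P s = [s] := by
  rw [validAppend, h]

lemma validAppend_of_getLast?_some [DecidableEq Rel]
    {P : List (Atom Rel × Term)} {t : Atom Rel × Term} (h : P.getLast? = some t)
    (s : Atom Rel × Term) :
    validAppend P s = if t.1 = s.1 then P.dropLast else P ++ [s] := by
  rw [validAppend, h]

lemma validify_spec [DecidableEq Rel] {q : CQ Rel} (P : List (Atom Rel × Term))
    (hP : IsPath q P) :
    IsPath q (validify P) ∧ IsValid (validify P) ∧
      pathEnd q (validify P) = pathEnd q P := by
  induction P using List.reverseRecOn with
  | nil => exact ⟨trivial, List.isChain_nil, rfl⟩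
  | append_singleton P s ih =>
    obtain ⟨A, y⟩ := s
    rw [IsPath, isPathFrom_append] at hP
    obtain ⟨hP0, hmem, htrav, -⟩ := hP
    obtain ⟨ihP, ihV, ihE⟩ := ih hP0
    rw [← pathEnd_eq_endFrom, ← ihE] at htrav
    rw [validify_append_singleton]
    set V := validify P with hVdef
    rcases hVlast : V.getLast? with _ | ⟨B, z⟩
    · -- V = []
      have hVnil : V = [] := List.getLast?_eq_none_iff.mp hVlast
      rw [validAppend_of_getLast?_none hVlast]
      have hz : pathEnd q V = Term.var q.target := by rw [hVnil]; rfl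
      refine ⟨⟨hmem, ?_, trivial⟩, List.isChain_singleton _, ?_⟩
      · rw [hz] at htrav; exact htrav
      · rw [pathEnd_eq_endFrom, pathEnd_eq_endFrom, endFrom_append]
        rfl
    · have hVne : V ≠ [] := by
        intro hc; rw [hc] at hVlast; simp at hVlast
      have hVgetLast : V.getLast hVne = (B, z) := by
        rwa [List.getLast?_eq_getLast hVne, Option.some.injEq] at hVlast
      have hVdecomp : V.dropLast ++ [(B, z)] = V := by
        rw [← hVgetLast]; exact List.dropLast_append_getLast hVne
      have hzend : pathEnd q V = z := by
        rw [pathEnd_eq_endFrom, endFrom_eq, hVlast]; rfl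
      have hPath' : IsPathFrom q (Term.var q.target) (V.dropLast ++ [(B, z)]) := by
        rw [hVdecomp]; exact ihP
      rw [isPathFrom_append] at hPath'
      obtain ⟨hPdl, hBmem, hBtrav, -⟩ := hPath'
      rw [validAppend_of_getLast?_some hVlast]
      by_cases hBA : ((B, z) : Atom Rel × Term).1 = ((A, y) : Atom Rel × Term).1
      · rw [if_pos hBA]
        have hy : y = endFrom (Term.var q.target) V.dropLast := by
          rw [hzend] at htrav
          rw [show B = A from hBA] at hBtrav
          exact traverses_cancel hBtrav htrav
        refine ⟨hPdl, ?_, ?_⟩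
        · show IsValid V.dropLast
          rw [IsValid, List.map_dropLast]
          exact ihV.prefix (List.dropLast_prefix _)
        · rw [pathEnd_eq_endFrom, pathEnd_eq_endFrom, endFrom_append, ← hy]
          rfl
      · rw [if_neg hBA]
        refine ⟨?_, ?_, ?_⟩
        · rw [IsPath, isPathFrom_append]
          refine ⟨ihP, hmem, ?_, trivial⟩
          rw [← pathEnd_eq_endFrom, hzend]
          rw [hzend] at htrav; exact htrav
        · simp only [IsValid, List.map_append, List.Chain', List.isChain_append]
          refine ⟨ihV, List.isChain_singleton _, ?_⟩
          intro a ha b hb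
          have ha' : a = B := by
            rw [List.getLast?_map, hVlast] at ha
            have : B = a := by simpa using ha
            exact this.symm
          have hb' : b = A := by
            have : A = b := by simpa using hb
            exact this.symm
          rw [ha', hb']
          exact fun hc => hBA hc
        · rw [pathEnd_eq_endFrom, pathEnd_eq_endFrom, endFrom_append,
            endFrom_append]
          rfl

lemma traverses_map (h : Term → Term) {A : Atom Rel} {u v : Term}
    (ht : Traverses A u v) : Traverses (A.mapTerms h) (h u) (h v) := by
  rcases ht with ⟨e1, e2⟩ | ⟨e1, e2⟩
  · exact Or.inl ⟨by simp [Atom.mapTerms, e1], by simp [Atom.mapTerms, e2]⟩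
  · exact Or.inr ⟨by simp [Atom.mapTerms, e1], by simp [Atom.mapTerms, e2]⟩

lemma isPathFrom_map {q q' : CQ Rel} {h : Term → Term}
    (hh : ∀ A ∈ q'.atoms, (A.mapTerms h) ∈ q.atoms) :
    ∀ {u : Term} {P : List (Atom Rel × Term)}, IsPathFrom q' u P →
      IsPathFrom q (h u) (mapPath h P) := by
  intro u P
  induction P generalizing u with
  | nil => intro _; trivial
  | cons s rest ih =>
    obtain ⟨A, v⟩ := s
    rintro ⟨hmem, htrav, hrest⟩
    exact ⟨hh A hmem, traverses_map h htrav, ih hrest⟩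

lemma endFrom_map (h : Term → Term) (u : Term) (P : List (Atom Rel × Term)) :
    endFrom (h u) (mapPath h P) = h (endFrom u P) := by
  induction P generalizing u with
  | nil => rfl
  | cons s rest ih => exact ih s.2

end KGQuery


namespace KGQuery

/-- Let `q'(x)` be a tree-like CQ and `h` a homomorphism from
`q'` to `q(x)`. For a node `w` of the query graph of `q'`, `P_w` denotes the
image under `h` of the unique path in `q'` from the root `x` to `w` (encoded
below by the hypotheses: `W` is the valid path of `q'` ending at `t`, and
`W, A, t'` is the valid path of `q'` ending at `t'`, expressing that `t` is the
parent of `t'` via the atom `A = R(t,t')`). With `A' = R(h(t),h(t'))`, exactly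
one of the following holds:
(i) `valid(P_{t'}) = valid(P_t), A', end(P_{t'})`, which happens exactly when
`A'` differs from the last atom of `valid(P_t)`; or
(ii) `valid(P_t) = valid(P_{t'}), A', end(P_t)`. -/
theorem treepath_valid_extension_cases {Rel : Type} [Fintype Rel] [DecidableEq Rel]
    (q q' : CQ Rel) (htgt : q'.target = q.target)
    (h : Term → Term) (hh : IsHom q' q h)
    (htree : IsTreeLike q')
    (r : Rel) (t t' : Term)
    (hA : (⟨r, t, t'⟩ : Atom Rel) ∈ q'.atoms)
    (W : List (Atom Rel × Term))
    (hW : IsValidPath q' W) (hWend : pathEnd q' W = t)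
    (hW' : IsValidPath q' (W ++ [((⟨r, t, t'⟩ : Atom Rel), t')])) :
    Xor'
      (validify (mapPath h (W ++ [((⟨r, t, t'⟩ : Atom Rel), t')])) =
        validify (mapPath h W) ++ [((⟨r, h t, h t'⟩ : Atom Rel), h t')])
      (validify (mapPath h W) =
        validify (mapPath h (W ++ [((⟨r, t, t'⟩ : Atom Rel), t')])) ++
          [((⟨r, h t, h t'⟩ : Atom Rel), h t)]) ∧
    ((validify (mapPath h (W ++ [((⟨r, t, t'⟩ : Atom Rel), t')])) =
        validify (mapPath h W) ++ [((⟨r, h t, h t'⟩ : Atom Rel), h t')]) ↔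
      (validify (mapPath h W)).getLast?.map Prod.fst ≠
        some (⟨r, h t, h t'⟩ : Atom Rel)) := by
  have hatoms : ∀ A ∈ q'.atoms, (A.mapTerms h) ∈ q.atoms := fun A hAm => hh.2.2 A hAm
  have htop : h (Term.var q'.target) = Term.var q.target := hh.1
  have hWpath : IsPath q (mapPath h W) := by
    have := isPathFrom_map hatoms hW.1
    rwa [htop] at this
  set A' : Atom Rel := ⟨r, h t, h t'⟩ with hA'def
  set s' : Atom Rel × Term := (A', h t') with hs'def
  have hmapapp : mapPath h (W ++ [((⟨r, t, t'⟩ : Atom Rel), t')]) =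
      mapPath h W ++ [s'] := by
    simp only [mapPath, List.map_append]
    rfl
  have hmapend : pathEnd q (mapPath h W) = h t := by
    rw [pathEnd_eq_endFrom, ← htop, endFrom_map, ← pathEnd_eq_endFrom, hWend]
  obtain ⟨hVpath, hVvalid, hVend⟩ := validify_spec (mapPath h W) hWpath
  set V : List (Atom Rel × Term) := validify (mapPath h W) with hVdef
  have hVendt : pathEnd q V = h t := hVend.trans hmapend
  have hsplit : validify (mapPath h (W ++ [((⟨r, t, t'⟩ : Atom Rel), t')])) =
      validAppend V s' := by
    rw [hmapapp, validify_append_singleton]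
  rcases hVlast : V.getLast? with _ | ⟨u1, u2⟩
  · -- V = []
    have hVnil : V = [] := List.getLast?_eq_none_iff.mp hVlast
    have happ : validAppend V s' = V ++ [s'] := by
      rw [validAppend_of_getLast?_none hVlast, hVnil]
      rfl
    have hleft : validify (mapPath h (W ++ [((⟨r, t, t'⟩ : Atom Rel), t')])) =
        V ++ [s'] := hsplit.trans happ
    constructor
    · refine Or.inl ⟨hleft, ?_⟩
      intro hcon
      rw [hleft, hVnil] at hcon
      simp at hcon
    · constructor
      · intro _
        simp
      · intro _
        exact hleft
  · -- V nonempty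
    have hVne : V ≠ [] := by
      intro hc; rw [hc] at hVlast; simp at hVlast
    have hVgetLast : V.getLast hVne = (u1, u2) := by
      rwa [List.getLast?_eq_getLast hVne, Option.some.injEq] at hVlast
    have hVdecomp : V.dropLast ++ [(u1, u2)] = V := by
      rw [← hVgetLast]; exact List.dropLast_append_getLast hVne
    have hu2 : u2 = h t := by
      rw [pathEnd_eq_endFrom, endFrom_eq, hVlast] at hVendt
      exact hVendt
    by_cases hu1 : u1 = A'
    · -- case (ii)
      have happ : validAppend V s' = V.dropLast := by
        rw [validAppend_of_getLast?_some hVlast]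
        simp [hu1, hs'def]
      have hright : V = validify (mapPath h (W ++ [((⟨r, t, t'⟩ : Atom Rel), t')]))
          ++ [(A', h t)] := by
        rw [hsplit, happ, ← hu1, ← hu2, hVdecomp]
      have hnotleft : ¬ (validify (mapPath h (W ++ [((⟨r, t, t'⟩ : Atom Rel), t')]))
          = V ++ [s']) := by
        intro hcon
        rw [hsplit, happ] at hcon
        have := congrArg List.length hcon
        rw [List.length_append, List.length_dropLast] at this
        have hpos : 0 < V.length := List.length_pos_iff.mpr hVne
        omega
      refine ⟨Or.inr ⟨hright, hnotleft⟩, ?_⟩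
      constructor
      · intro hcon; exact absurd hcon hnotleft
      · intro hne
        exfalso
        apply hne
        rw [Option.map_some, hu1]
    · -- case (i)
      have happ : validAppend V s' = V ++ [s'] := by
        rw [validAppend_of_getLast?_some hVlast]
        simp [hu1, hs'def]
      have hleft : validify (mapPath h (W ++ [((⟨r, t, t'⟩ : Atom Rel), t')])) =
          V ++ [s'] := hsplit.trans happ
      have hnotright : ¬ (V = validify (mapPath h (W ++ [((⟨r, t, t'⟩ : Atom Rel), t')]))
          ++ [(A', h t)]) := by
        intro hcon
        rw [hleft] at hcon
        have := congrArg List.length hcon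
        simp at this
      refine ⟨Or.inl ⟨hleft, hnotright⟩, ?_⟩
      constructor
      · intro _
        simp only [Option.map_some, ne_eq, Option.some.injEq]
        exact hu1
      · intro _
        exact hleft

end KGQuery
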